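/- Let f = h + conj(g) where h is analytic on 𝔻 with h(0)=0, h'(0)=1, Re(1 + z h''/h') > α on 𝔻 (0 ≤ α < 1), and g'(z) = ζ z^n h'(z) with 0 ≤ |ζ| < 1/(2n-1), n ≥ 1, g(0)=0. Then for |z| = r < 1, |f(z)| ≤ ∫₀^r (1 + |ζ|ρⁿ)/(1-ρ)^{2(1-α)} dρ. -/

import Mathlib

open Complex Metric Filter Topology Set intervalIntegral MeasureTheory

lemma aux_ne (α : ℝ) (h : ℂ → ℂ)
    (hhA : AnalyticOnNhd ℂ h (ball (0:ℂ) 1)) (h1 : deriv h 0 = 1)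
    (hconv : ∀ z ∈ ball (0:ℂ) 1, α < (1 + z * deriv (deriv h) z / deriv h z).re) :
    ∀ z ∈ ball (0:ℂ) 1, deriv h z ≠ 0 := by
  intro z₀ hz₀ hzero
  set φ := deriv h with hφdef
  have φA : AnalyticOnNhd ℂ φ (ball (0:ℂ) 1) := hhA.deriv
  have h0mem : (0:ℂ) ∈ ball (0:ℂ) 1 := by simp
  have hz₀ne : z₀ ≠ 0 := by
    rintro rfl
    rw [h1] at hzero
    exact one_ne_zero hzero
  have hnz : ¬ (φ =ᶠ[𝓝 z₀] 0) := by
    intro hev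
    have := φA.eqOn_zero_of_preconnected_of_eventuallyEq_zero
      (convex_ball (0:ℂ) 1).isPreconnected hz₀ hev h0mem
    rw [h1] at this
    exact one_ne_zero this
  have ha : AnalyticAt ℂ φ z₀ := φA z₀ hz₀
  have horder : analyticOrderAt φ z₀ ≠ ⊤ := by
    intro htop
    rw [analyticOrderAt_eq_top] at htop
    exact hnz htop
  obtain ⟨m, hm⟩ := WithTop.ne_top_iff_exists.mp horder
  obtain ⟨ψ, hψa, hψne, hev⟩ := (ha.analyticOrderAt_eq_natCast (n := m)).mp hm.symm
  have hm1 : 1 ≤ m := by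
    rcases Nat.eq_zero_or_pos m with rfl | hpos
    · exfalso
      have := hev.self_of_nhds
      simp only [pow_zero, one_smul] at this
      exact hψne (this ▸ hzero)
    · exact hpos
  -- neighborhood where everything is nice
  have hev' : ∀ᶠ w in 𝓝 z₀, (φ w = (w - z₀)^m * ψ w ∧ AnalyticAt ℂ ψ w) ∧
      (ψ w ≠ 0 ∧ w ∈ ball (0:ℂ) 1) := by
    filter_upwards [hev, hψa.eventually_analyticAt,
      hψa.continuousAt.eventually_ne hψne, isOpen_ball.mem_nhds hz₀] with w h1 h2 h3 h4
    exact ⟨⟨by simpa [smul_eq_mul] using h1, h2⟩, h3, h4⟩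
  obtain ⟨V, hVsub, hVopen, hVmem⟩ := _root_.eventually_nhds_iff.mp hev'
  have hderivφ : ∀ w ∈ V, deriv φ w =
      (m : ℂ) * (w - z₀)^(m-1) * ψ w + (w - z₀)^m * deriv ψ w := by
    intro w hw
    obtain ⟨⟨hfw, hψaw⟩, hψnw, _⟩ := hVsub w hw
    have hevw : φ =ᶠ[𝓝 w] fun x => (x - z₀)^m * ψ x :=
      _root_.eventually_nhds_iff.mpr ⟨V, fun x hx => (hVsub x hx).1.1, hVopen, hw⟩
    rw [hevw.deriv_eq]
    have hψd : HasDerivAt ψ (deriv ψ w) w := hψaw.differentiableAt.hasDerivAt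
    have hpow : HasDerivAt (fun x : ℂ => (x - z₀)^m)
        ((m : ℂ) * (w - z₀)^(m-1) * 1) w := ((hasDerivAt_id w).sub_const z₀).pow m
    have := (hpow.mul hψd).deriv
    rw [show (fun x => (x - z₀) ^ m * ψ x) = (fun x => (x - z₀) ^ m) * ψ from rfl, this]; ring
  -- the path s ↦ (1-s) z₀
  set w : ℝ → ℂ := fun s => (1 - (s:ℂ)) * z₀ with hwdef
  have hwcont : Tendsto w (𝓝[>] (0:ℝ)) (𝓝 z₀) := by
    have : Tendsto w (𝓝 (0:ℝ)) (𝓝 z₀) := by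
      have : Continuous w := by continuity
      simpa [hwdef] using this.tendsto 0
    exact this.mono_left nhdsWithin_le_nhds
  -- eventual formula for q
  set q : ℝ → ℝ := fun s => (1 + w s * deriv φ (w s) / φ (w s)).re with hqdef
  have hformula : ∀ᶠ s in 𝓝[>] (0:ℝ), q s =
      1 - (1 - s) * m / s + (w s * deriv ψ (w s) / ψ (w s)).re := by
    filter_upwards [hwcont.eventually (hVopen.mem_nhds hVmem),
      Ioo_mem_nhdsGT_of_mem (Set.left_mem_Ico.mpr zero_lt_one)] with s hsV hs
    obtain ⟨⟨hfw, _⟩, hψnw, _⟩ := hVsub _ hsV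
    have hs0 : (s:ℂ) ≠ 0 := by exact_mod_cast (ne_of_gt hs.1)
    have hwz : w s - z₀ = -(s:ℂ) * z₀ := by simp [hwdef]; ring
    have hwzne : w s - z₀ ≠ 0 := by
      rw [hwz]; exact mul_ne_zero (neg_ne_zero.mpr hs0) hz₀ne
    have hpow : (w s - z₀)^m = (w s - z₀)^(m-1) * (w s - z₀) := by
      conv_lhs => rw [show m = (m-1) + 1 by omega]
      rw [pow_succ]
    have key : w s * deriv φ (w s) / φ (w s)
        = (w s * m) / (w s - z₀) + w s * deriv ψ (w s) / ψ (w s) := by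
      rw [hderivφ _ hsV, hfw, hpow]
      have hpne : (w s - z₀)^(m-1) ≠ 0 := pow_ne_zero _ hwzne
      field_simp
    have key2 : (w s * m) / (w s - z₀) = ((-( (1-s) * m / s ) : ℝ) : ℂ) := by
      rw [hwz, hwdef]
      have : (1 - (s:ℂ)) * z₀ * m / (-(s:ℂ) * z₀) = -((1-(s:ℂ)) * m / s) := by
        field_simp
      rw [this]
      push_cast
      ring
    rw [hqdef]
    simp only [key, key2]
    rw [Complex.add_re, Complex.add_re, Complex.one_re, Complex.ofReal_re]
    ring
  -- tendsto atBot
  have htermc : Tendsto (fun s => (w s * deriv ψ (w s) / ψ (w s)).re) (𝓝[>] (0:ℝ))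
      (𝓝 ((z₀ * deriv ψ z₀ / ψ z₀).re)) := by
    obtain ⟨U, hUmem, hUA⟩ := hψa.exists_mem_nhds_analyticOnNhd
    have hdca : ContinuousAt (deriv ψ) z₀ := by
      have := hUA.deriv z₀ (mem_of_mem_nhds hUmem)
      exact this.continuousAt
    have hc : ContinuousAt (fun x : ℂ => x * deriv ψ x / ψ x) z₀ :=
      (continuousAt_id.mul hdca).div hψa.continuousAt hψne
    exact (Complex.continuous_re.tendsto _).comp (hc.tendsto.comp hwcont)
  have hmain : Tendsto q (𝓝[>] (0:ℝ)) atBot := by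
    refine Tendsto.congr' (hformula.mono fun s hs => hs.symm) ?_
    have h1 : Tendsto (fun s : ℝ => (1 - s) * m / s) (𝓝[>] (0:ℝ)) atTop := by
      have hnum : Tendsto (fun s : ℝ => (1 - s) * m) (𝓝[>] (0:ℝ)) (𝓝 ((1:ℝ) * m)) := by
        have : Tendsto (fun s : ℝ => (1 - s) * m) (𝓝 (0:ℝ)) (𝓝 ((1 - 0) * m)) := by
          exact ((continuous_const.sub continuous_id).mul continuous_const).tendsto 0
        simpa using this.mono_left nhdsWithin_le_nhds
      have hm0 : (0:ℝ) < 1 * m := by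
        have : (1:ℝ) ≤ m := by exact_mod_cast hm1
        linarith
      simpa [div_eq_mul_inv] using Filter.Tendsto.pos_mul_atTop hm0 hnum tendsto_inv_nhdsGT_zero
    have h2 : Tendsto (fun s : ℝ => 1 - (1 - s) * m / s) (𝓝[>] (0:ℝ)) atBot := by
      exact tendsto_const_nhds.add_atBot (tendsto_neg_atTop_atBot.comp h1)
    exact h2.atBot_add htermc
  have hup : ∀ᶠ s in 𝓝[>] (0:ℝ), α < q s := by
    filter_upwards [Ioo_mem_nhdsGT_of_mem (Set.left_mem_Ico.mpr zero_lt_one)] with s hs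
    have hball : w s ∈ ball (0:ℂ) 1 := by
      have habs : ‖(1 - (s:ℂ)) * z₀‖ < 1 := by
        have hcast : (1 - (s:ℂ)) = ((1 - s : ℝ) : ℂ) := by push_cast; ring
        rw [hcast, norm_mul, Complex.norm_real, Real.norm_eq_abs,
          abs_of_pos (by linarith [hs.2] : (0:ℝ) < 1 - s)]
        have hz₀lt : ‖z₀‖ < 1 := mem_ball_zero_iff.mp hz₀
        have h2 : (1 - s) * ‖z₀‖ ≤ 1 * ‖z₀‖ :=
          mul_le_mul_of_nonneg_right (by linarith [hs.1]) (norm_nonneg _)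
        calc (1-s) * ‖z₀‖ ≤ 1 * ‖z₀‖ := h2
          _ < 1 := by simpa using hz₀lt
      rw [mem_ball_zero_iff]
      simpa [hwdef] using habs
    exact hconv _ hball
  have hdown : ∀ᶠ s in 𝓝[>] (0:ℝ), q s < α := hmain.eventually (eventually_lt_atBot α)
  obtain ⟨s, hs1, hs2⟩ := (hup.and hdown).exists
  linarith

lemma aux_u (α : ℝ) (hα1 : α < 1) (h : ℂ → ℂ)
    (hhA : AnalyticOnNhd ℂ h (ball (0:ℂ) 1)) (h1 : deriv h 0 = 1)
    (hconv : ∀ z ∈ ball (0:ℂ) 1, α < (1 + z * deriv (deriv h) z / deriv h z).re) :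
    ∀ z ∈ ball (0:ℂ) 1, ‖z * deriv (deriv h) z / deriv h z‖ ≤
      2 * (1 - α) * ‖z‖ / (1 - ‖z‖) := by
  have hne := aux_ne α h hhA h1 hconv
  set c : ℝ := 1 - α with hcdef
  have hc : 0 < c := by simp [hcdef]; linarith
  set u : ℂ → ℂ := fun w => w * deriv (deriv h) w / deriv h w with hudef
  have uA : AnalyticOnNhd ℂ u (ball (0:ℂ) 1) :=
    (analyticOnNhd_id.mul hhA.deriv.deriv).div hhA.deriv hne
  have hRe : ∀ w ∈ ball (0:ℂ) 1, -c < (u w).re := by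
    intro w hw
    have := hconv w hw
    rw [Complex.add_re, Complex.one_re] at this
    simp only [hcdef, hudef]
    linarith
  have hdenom : ∀ w ∈ ball (0:ℂ) 1, u w + 2*c ≠ 0 := by
    intro w hw hz
    have : (u w + 2*c).re = (u w).re + 2*c := by
      simp [Complex.add_re]
    rw [hz] at this
    simp at this
    have := hRe w hw
    linarith
  set W : ℂ → ℂ := fun w => u w / (u w + 2*c) with hWdef
  have WA : AnalyticOnNhd ℂ W (ball (0:ℂ) 1) :=
    uA.div (uA.add analyticOnNhd_const) hdenom
  have hW0 : W 0 = 0 := by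
    have : u 0 = 0 := by simp [hudef]
    simp [hWdef, this]
  have hWlt : ∀ w ∈ ball (0:ℂ) 1, ‖W w‖ < 1 := by
    intro w hw
    have hlt : Complex.normSq (u w) < Complex.normSq (u w + 2*c) := by
      have hexp : Complex.normSq (u w + 2*c) =
          Complex.normSq (u w) + 4*c*(u w).re + 4*c^2 := by
        simp [Complex.normSq_apply, Complex.add_re, Complex.add_im]
        ring
      have := hRe w hw
      nlinarith
    rw [hWdef]
    simp only [norm_div]
    rw [div_lt_one]
    · rw [Complex.norm_def, Complex.norm_def]
      exact (Real.sqrt_lt_sqrt (Complex.normSq_nonneg _) hlt)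
    · have : ‖u w + 2*c‖ ≠ 0 := by
        simpa using hdenom w hw
      positivity
  have hmaps : MapsTo W (ball (0:ℂ) 1) (ball (0:ℂ) 1) := by
    intro w hw
    rw [mem_ball_zero_iff]
    exact hWlt w hw
  intro z hz
  have hschwarz : ‖W z‖ ≤ ‖z‖ :=
    Complex.norm_le_norm_of_mapsTo_ball WA.differentiableOn
      (hmaps.mono_right ball_subset_closedBall) hW0
      (by rw [← mem_ball_zero_iff]; exact hz)
  -- u z (1 - W z) = 2c W z
  have hid : u z * (1 - W z) = 2*c * W z := by
    have hd := hdenom z hz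
    rw [hWdef]
    field_simp
    ring
  have habsz : ‖z‖ < 1 := by
    rw [← mem_ball_zero_iff]; exact hz
  have h1W : 1 - ‖z‖ ≤ ‖1 - W z‖ := by
    calc 1 - ‖z‖ ≤ 1 - ‖W z‖ := by linarith [hschwarz]
      _ ≤ ‖1 - W z‖ := by
          have := norm_sub_norm_le (1:ℂ) (W z)
          simpa using this
  have hkey : ‖u z‖ * (1 - ‖z‖) ≤ 2*c*‖z‖ := by
    calc ‖u z‖ * (1 - ‖z‖)
        ≤ ‖u z‖ * ‖1 - W z‖ := by
          apply mul_le_mul_of_nonneg_left h1W (norm_nonneg _)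
      _ = ‖u z * (1 - W z)‖ := (norm_mul _ _).symm
      _ = ‖2*c * W z‖ := by rw [hid]
      _ = 2*c*‖W z‖ := by
          rw [norm_mul]
          congr 1
          rw [show (2*(c:ℂ)) = ((2*c:ℝ):ℂ) by push_cast; ring, Complex.norm_real, Real.norm_eq_abs,
            abs_of_pos (by positivity)]
      _ ≤ 2*c*‖z‖ := by
          apply mul_le_mul_of_nonneg_left hschwarz (by positivity)
  have hpos : 0 < 1 - ‖z‖ := by linarith
  have hkey' : ‖z * deriv (deriv h) z / deriv h z‖ * (1 - ‖z‖)
      ≤ 2 * (1 - α) * ‖z‖ := hkey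
  exact (le_div_iff₀ hpos).mpr hkey'

lemma aux_distortion (α : ℝ) (hα1 : α < 1) (h : ℂ → ℂ)
    (hhA : AnalyticOnNhd ℂ h (ball (0:ℂ) 1)) (h1 : deriv h 0 = 1)
    (hconv : ∀ z ∈ ball (0:ℂ) 1, α < (1 + z * deriv (deriv h) z / deriv h z).re) :
    ∀ w ∈ ball (0:ℂ) 1, ‖deriv h w‖ ≤
      (1 - ‖w‖) ^ (-(2*(1-α)) : ℝ) := by
  have hne := aux_ne α h hhA h1 hconv
  have hu := aux_u α hα1 h hhA h1 hconv
  intro w hw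
  rcases eq_or_ne w 0 with rfl | hw0
  · simp [h1]
  set r : ℝ := ‖w‖ with hrdef
  have hr0 : 0 < r := by
    rw [hrdef]; exact norm_pos_iff.mpr hw0
  have hr1 : r < 1 := by
    rw [hrdef, ← mem_ball_zero_iff]; exact hw
  -- the segment parametrization
  have hmem : ∀ t : ℝ, |t| * r < 1 → ((t:ℂ) * w) ∈ ball (0:ℂ) 1 := by
    intro t ht
    rw [mem_ball_zero_iff, norm_mul, Complex.norm_real, Real.norm_eq_abs]
    exact ht
  have hmemI : ∀ t ∈ Icc (0:ℝ) 1, ((t:ℂ) * w) ∈ ball (0:ℂ) 1 := by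
    intro t ht
    apply hmem
    rw [_root_.abs_of_nonneg ht.1]
    calc t * r ≤ 1 * r := mul_le_mul_of_nonneg_right ht.2 hr0.le
      _ < 1 := by simpa using hr1
  set J : Set ℝ := Ioo (-(1/r)) (1/r) with hJdef
  have hJopen : IsOpen J := isOpen_Ioo
  have hJmem : ∀ t ∈ J, ((t:ℂ) * w) ∈ ball (0:ℂ) 1 := by
    intro t ht
    apply hmem
    rw [← lt_div_iff₀ hr0]
    exact abs_lt.mpr ⟨ht.1, ht.2⟩
  have hIccJ : Icc (0:ℝ) 1 ⊆ J := by
    intro t ht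
    have h1r : 1 < 1/r := by
      rw [lt_div_iff₀ hr0]; simpa using hr1
    have hr' : 0 < 1/r := by positivity
    exact ⟨by linarith [ht.1], by linarith [ht.2]⟩
  set v : ℝ → ℂ := fun s => w * deriv (deriv h) ((s:ℂ)*w) / deriv h ((s:ℂ)*w) with hvdef
  have hmulcont : Continuous fun s : ℝ => (s:ℂ)*w := by fun_prop
  have hvcontJ : ∀ t ∈ J, ContinuousAt v t := by
    intro t ht
    have htw := hJmem t ht
    have c1 : ContinuousAt (deriv (deriv h) ∘ fun s : ℝ => (s:ℂ)*w) t :=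
      ContinuousAt.comp ((hhA.deriv.deriv _ htw).continuousAt) hmulcont.continuousAt
    have c2 : ContinuousAt (deriv h ∘ fun s : ℝ => (s:ℂ)*w) t :=
      ContinuousAt.comp ((hhA.deriv _ htw).continuousAt) hmulcont.continuousAt
    have c1' : ContinuousAt (fun s : ℝ => deriv (deriv h) ((s:ℂ)*w)) t := c1
    have c2' : ContinuousAt (fun s : ℝ => deriv h ((s:ℂ)*w)) t := c2
    exact (continuousAt_const.mul c1').div c2' (hne _ htw)
  have hvcont : ContinuousOn v J := fun t ht => (hvcontJ t ht).continuousWithinAt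
  set I : ℝ → ℂ := fun t => ∫ s in (0:ℝ)..t, v s with hIdef
  have hIderiv : ∀ t ∈ Icc (0:ℝ) 1, HasDerivAt I (v t) t := by
    intro t ht
    apply intervalIntegral.integral_hasDerivAt_right
    · apply (hvcont.mono ?_).intervalIntegrable
      rw [uIcc_of_le ht.1]
      exact fun s hs => hIccJ ⟨hs.1, le_trans hs.2 ht.2⟩
    · exact hvcont.stronglyMeasurableAtFilter hJopen t (hIccJ ht)
    · exact hvcontJ t (hIccJ ht)
  -- F is constant
  set F : ℝ → ℂ := fun t => Complex.exp (-I t) * deriv h ((t:ℂ)*w) with hFdef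
  have hFderiv : ∀ t ∈ Icc (0:ℝ) 1, HasDerivAt F 0 t := by
    intro t ht
    have htw := hmemI t ht
    have hG : HasDerivAt (fun x : ℂ => deriv h (x * w)) (deriv (deriv h) ((t:ℂ)*w) * w) (t:ℂ) := by
      have houter : HasDerivAt (deriv h) (deriv (deriv h) ((t:ℂ)*w)) ((t:ℂ)*w) :=
        ((hhA.deriv _ htw).differentiableAt).hasDerivAt
      have hinner : HasDerivAt (fun x : ℂ => x * w) w (t:ℂ) := by
        simpa using (hasDerivAt_id (t:ℂ)).mul_const w
      simpa [mul_comm, Function.comp_def] using houter.comp (t:ℂ) hinner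
    have hG' : HasDerivAt (fun s : ℝ => deriv h ((s:ℂ)*w)) (deriv (deriv h) ((t:ℂ)*w) * w) t :=
      hG.comp_ofReal
    have hE : HasDerivAt (fun s : ℝ => Complex.exp (-I s)) (Complex.exp (-I t) * (-v t)) t :=
      ((hIderiv t ht).neg).cexp
    have := hE.mul hG'
    refine this.congr_deriv ?_
    have hne' := hne _ htw
    have hne'' : deriv h (w * (t:ℂ)) ≠ 0 := by rw [mul_comm]; exact hne'
    simp only [hvdef]
    field_simp
    ring
  have hFcont : ContinuousOn F (Icc (0:ℝ) 1) :=
    fun t ht => ((hFderiv t ht).continuousAt).continuousWithinAt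
  have hFconst : ∀ t ∈ Icc (0:ℝ) 1, F t = F 0 := by
    apply constant_of_has_deriv_right_zero hFcont
    intro t ht
    exact ((hFderiv t (Ico_subset_Icc_self ht)).hasDerivWithinAt)
  have hF0 : F 0 = 1 := by
    rw [hFdef]
    simp [hIdef, h1]
  have hF1 := hFconst 1 (by norm_num)
  rw [hF0] at hF1
  -- deriv h w = exp (I 1)
  have hdw : deriv h w = Complex.exp (I 1) := by
    have : Complex.exp (-I 1) * deriv h ((1:ℝ) * w : ℂ) = 1 := hF1
    rw [Complex.ofReal_one, one_mul] at this
    have h2 : deriv h w = (Complex.exp (-I 1))⁻¹ := by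
      field_simp at this ⊢
      linear_combination this
    rw [h2, ← Complex.exp_neg, neg_neg]
  -- bound Re (I 1)
  have hnorm_v : ∀ s ∈ Icc (0:ℝ) 1, s ≠ 0 → ‖v s‖ ≤ 2*(1-α)*r/(1 - s*r) := by
    intro s hs hs0
    have hsw := hmemI s hs
    have huval := hu _ hsw
    have habs_sw : ‖(s:ℂ)*w‖ = s * r := by
      rw [norm_mul, Complex.norm_real, Real.norm_eq_abs, _root_.abs_of_nonneg hs.1]
    rw [habs_sw] at huval
    have hrel : (s:ℂ) * w * deriv (deriv h) ((s:ℂ)*w) / deriv h ((s:ℂ)*w) = (s:ℂ) * v s := by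
      rw [hvdef]; field_simp
    rw [hrel] at huval
    rw [norm_mul, Complex.norm_real, Real.norm_eq_abs, _root_.abs_of_nonneg hs.1] at huval
    have hden : 0 < 1 - s*r := by
      nlinarith [hs.1, hs.2, hr0, hr1]
    have hspos : 0 < s := lt_of_le_of_ne hs.1 (Ne.symm hs0)
    have hspos : 0 < s := lt_of_le_of_ne hs.1 (Ne.symm hs0)
    have h3 : s * ‖v s‖ ≤ 2*(1-α)*(s*r)/(1 - s*r) := huval
    rw [← mul_le_mul_iff_right₀ hspos]
    calc s * ‖v s‖ ≤ 2*(1-α)*(s*r)/(1 - s*r) := h3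
      _ = s * (2*(1-α)*r/(1 - s*r)) := by field_simp
  -- integrability
  have hvcont01 : ContinuousOn v (Icc (0:ℝ) 1) := hvcont.mono hIccJ
  have hvInt : IntervalIntegrable (fun s => ‖v s‖) volume 0 1 := by
    apply ContinuousOn.intervalIntegrable
    rw [uIcc_of_le zero_le_one]
    exact hvcont01.norm
  set B : ℝ → ℝ := fun s => 2*(1-α)*r/(1 - s*r) with hBdef
  have hBden : ∀ s ∈ Icc (0:ℝ) 1, 0 < 1 - s*r := by
    intro s hs
    nlinarith [hs.1, hs.2, hr0, hr1]
  have hBcont : ContinuousOn B (Icc (0:ℝ) 1) := by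
    apply ContinuousOn.div continuousOn_const
    · exact (continuousOn_const.sub (continuousOn_id.mul continuousOn_const))
    · exact fun s hs => (hBden s hs).ne'
  have hBInt : IntervalIntegrable B volume 0 1 := by
    apply ContinuousOn.intervalIntegrable
    rw [uIcc_of_le zero_le_one]
    exact hBcont
  -- a.e. bound
  have hae : (fun s => ‖v s‖) ≤ᵐ[volume.restrict (Icc (0:ℝ) 1)] B := by
    have hsing : (volume.restrict (Icc (0:ℝ) 1)) {(0:ℝ)} = 0 := by
      rw [Measure.restrict_apply (measurableSet_singleton 0)]
      refine measure_mono_null inter_subset_left ?_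
      exact Real.volume_singleton
    have hne0 : ∀ᵐ s ∂(volume.restrict (Icc (0:ℝ) 1)), s ≠ 0 := by
      rw [ae_iff]
      convert hsing using 2
      ext s; simp
    have hmem' : ∀ᵐ s ∂(volume.restrict (Icc (0:ℝ) 1)), s ∈ Icc (0:ℝ) 1 :=
      ae_restrict_mem measurableSet_Icc
    filter_upwards [hne0, hmem'] with s hs1 hs2
    exact hnorm_v s hs2 hs1
  -- value of ∫ B
  have hintB : (∫ s in (0:ℝ)..1, B s) = 2*(1-α) * (- Real.log (1 - r)) := by
    have hG : ∀ s ∈ uIcc (0:ℝ) 1,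
        HasDerivAt (fun s : ℝ => -(2*(1-α)) * Real.log (1 - s*r)) (B s) s := by
      intro s hs
      rw [uIcc_of_le zero_le_one] at hs
      have hden := hBden s hs
      have hinner : HasDerivAt (fun s : ℝ => 1 - s*r) (-r) s := by
        simpa using ((hasDerivAt_id s).mul_const r).const_sub 1
      have hlog : HasDerivAt (fun s : ℝ => Real.log (1 - s*r)) ((1 - s*r)⁻¹ * (-r)) s :=
        by have := (Real.hasDerivAt_log hden.ne').comp s hinner; exact this
      have := hlog.const_mul (-(2*(1-α)))
      refine this.congr_deriv ?_
      rw [hBdef]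
      field_simp
    rw [intervalIntegral.integral_eq_sub_of_hasDerivAt hG hBInt]
    simp
  -- conclude
  have hIle : (I 1).re ≤ 2*(1-α) * (- Real.log (1 - r)) := by
    calc (I 1).re ≤ ‖I 1‖ := Complex.re_le_norm _
      _ = ‖I 1‖ := rfl
      _ ≤ ∫ s in (0:ℝ)..1, ‖v s‖ := intervalIntegral.norm_integral_le_integral_norm zero_le_one
      _ ≤ ∫ s in (0:ℝ)..1, B s :=
          intervalIntegral.integral_mono_ae_restrict zero_le_one hvInt hBInt hae
      _ = 2*(1-α) * (- Real.log (1 - r)) := hintB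
  rw [hdw, Complex.norm_exp]
  calc Real.exp ((I 1).re) ≤ Real.exp (2*(1-α) * (- Real.log (1 - r))) :=
        Real.exp_le_exp.mpr hIle
    _ = (1 - r) ^ (-(2*(1-α)) : ℝ) := by
        rw [Real.rpow_def_of_pos (by linarith : (0:ℝ) < 1 - r)]
        congr 1
        ring

theorem stmt_12 (α : ℝ) (hα : 0 ≤ α ∧ α < 1)
    (ζ : ℂ) (n : ℕ) (hn : 1 ≤ n) (hζ : ‖ζ‖ < 1 / (2 * n - 1))
    (h g : ℂ → ℂ)
    (hhA : AnalyticOnNhd ℂ h (ball (0 : ℂ) 1))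
    (hgA : AnalyticOnNhd ℂ g (ball (0 : ℂ) 1))
    (h0 : h 0 = 0) (h1 : deriv h 0 = 1) (g0 : g 0 = 0)
    (hconv : ∀ z ∈ ball (0 : ℂ) 1,
      α < (1 + z * deriv (deriv h) z / deriv h z).re)
    (hrel : ∀ z ∈ ball (0 : ℂ) 1, deriv g z = ζ * z ^ n * deriv h z) :
    ∀ z ∈ ball (0 : ℂ) 1,
      ‖h z + starRingEnd ℂ (g z)‖ ≤
        ∫ ρ in (0 : ℝ)..(‖z‖),
          (1 + ‖ζ‖ * ρ ^ n) / (1 - ρ) ^ (2 * (1 - α)) := by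
  obtain ⟨hα0, hα1⟩ := hα
  have hdist := aux_distortion α hα1 h hhA h1 hconv
  intro z hz
  rcases eq_or_ne z 0 with rfl | hz0
  · simp [h0, g0]
  set r : ℝ := ‖z‖ with hrdef
  have hr0 : 0 < r := norm_pos_iff.mpr hz0
  have hr1 : r < 1 := by
    rw [hrdef, ← mem_ball_zero_iff]; exact hz
  have hmemI : ∀ t ∈ Icc (0:ℝ) 1, ((t:ℂ) * z) ∈ ball (0:ℂ) 1 := by
    intro t ht
    rw [mem_ball_zero_iff, norm_mul, Complex.norm_real, Real.norm_eq_abs,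
      _root_.abs_of_nonneg ht.1]
    calc t * ‖z‖ ≤ 1 * ‖z‖ := mul_le_mul_of_nonneg_right ht.2 (norm_nonneg _)
      _ < 1 := by simpa [← hrdef] using hr1
  have habs_tz : ∀ t ∈ Icc (0:ℝ) 1, ‖(t:ℂ)*z‖ = t * r := by
    intro t ht
    rw [norm_mul, Complex.norm_real, Real.norm_eq_abs, _root_.abs_of_nonneg ht.1]
  have hden : ∀ t ∈ Icc (0:ℝ) 1, 0 < 1 - t*r := by
    intro t ht
    nlinarith [ht.1, ht.2]
  -- FTC for h along segment
  have hmulc : Continuous fun t : ℝ => (t:ℂ)*z := by continuity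
  have hcont_dh : ContinuousOn (fun t : ℝ => deriv h ((t:ℂ)*z) * z) (Icc (0:ℝ) 1) := by
    intro t ht
    have : ContinuousAt (deriv h ∘ fun t : ℝ => (t:ℂ)*z) t :=
      ContinuousAt.comp ((hhA.deriv _ (hmemI t ht)).continuousAt) hmulc.continuousAt
    exact ((this.mul continuousAt_const)).continuousWithinAt
  have hcont_dg : ContinuousOn (fun t : ℝ => deriv g ((t:ℂ)*z) * z) (Icc (0:ℝ) 1) := by
    intro t ht
    have : ContinuousAt (deriv g ∘ fun t : ℝ => (t:ℂ)*z) t :=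
      ContinuousAt.comp ((hgA.deriv _ (hmemI t ht)).continuousAt) hmulc.continuousAt
    exact ((this.mul continuousAt_const)).continuousWithinAt
  have hderiv_seg : ∀ (f : ℂ → ℂ), AnalyticOnNhd ℂ f (ball (0:ℂ) 1) →
      ∀ t ∈ uIcc (0:ℝ) 1, HasDerivAt (fun t : ℝ => f ((t:ℂ)*z)) (deriv f ((t:ℂ)*z) * z) t := by
    intro f hfA t ht
    rw [uIcc_of_le zero_le_one] at ht
    have htz := hmemI t ht
    have houter : HasDerivAt f (deriv f ((t:ℂ)*z)) ((t:ℂ)*z) :=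
      ((hfA _ htz).differentiableAt).hasDerivAt
    have hinner : HasDerivAt (fun x : ℂ => x * z) z (t:ℂ) := by
      simpa using (hasDerivAt_id (t:ℂ)).mul_const z
    have := (houter.comp (t:ℂ) hinner).comp_ofReal
    simpa [mul_comm] using this
  have hIh : IntervalIntegrable (fun t : ℝ => deriv h ((t:ℂ)*z) * z) volume 0 1 := by
    apply ContinuousOn.intervalIntegrable
    rw [uIcc_of_le zero_le_one]; exact hcont_dh
  have hIg : IntervalIntegrable (fun t : ℝ => deriv g ((t:ℂ)*z) * z) volume 0 1 := by
    apply ContinuousOn.intervalIntegrable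
    rw [uIcc_of_le zero_le_one]; exact hcont_dg
  have hHz : h z = ∫ t in (0:ℝ)..1, deriv h ((t:ℂ)*z) * z := by
    have := intervalIntegral.integral_eq_sub_of_hasDerivAt (hderiv_seg h hhA) hIh
    rw [this]
    norm_num [h0]
  have hGz : g z = ∫ t in (0:ℝ)..1, deriv g ((t:ℂ)*z) * z := by
    have := intervalIntegral.integral_eq_sub_of_hasDerivAt (hderiv_seg g hgA) hIg
    rw [this]
    norm_num [g0]
  -- bounds
  set c2 : ℝ := 2*(1-α) with hc2def
  set B1 : ℝ → ℝ := fun t => (1 - t*r) ^ (-c2 : ℝ) * r with hB1def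
  set B2 : ℝ → ℝ := fun t => ‖ζ‖ * (t*r)^n * ((1 - t*r) ^ (-c2 : ℝ) * r) with hB2def
  have hB1cont : ContinuousOn B1 (Icc (0:ℝ) 1) := by
    apply ContinuousOn.mul ?_ continuousOn_const
    apply ContinuousOn.rpow_const
    · exact continuousOn_const.sub (continuousOn_id.mul continuousOn_const)
    · exact fun t ht => Or.inl (hden t ht).ne'
  have hB2cont : ContinuousOn B2 (Icc (0:ℝ) 1) := by
    apply ContinuousOn.mul ?_ hB1cont
    exact continuousOn_const.mul ((continuousOn_id.mul continuousOn_const).pow n)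
  have hB1int : IntervalIntegrable B1 volume 0 1 := by
    apply ContinuousOn.intervalIntegrable; rw [uIcc_of_le zero_le_one]; exact hB1cont
  have hB2int : IntervalIntegrable B2 volume 0 1 := by
    apply ContinuousOn.intervalIntegrable; rw [uIcc_of_le zero_le_one]; exact hB2cont
  have hbound1 : ∀ t ∈ Icc (0:ℝ) 1, ‖deriv h ((t:ℂ)*z) * z‖ ≤ B1 t := by
    intro t ht
    rw [norm_mul, ← hrdef, hB1def]
    apply mul_le_mul_of_nonneg_right ?_ hr0.le
    have := hdist _ (hmemI t ht)
    rwa [habs_tz t ht] at this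
  have hbound2 : ∀ t ∈ Icc (0:ℝ) 1, ‖deriv g ((t:ℂ)*z) * z‖ ≤ B2 t := by
    intro t ht
    rw [hrel _ (hmemI t ht)]
    rw [norm_mul, norm_mul, norm_mul, ← hrdef, norm_pow, habs_tz t ht, hB2def]
    have hd := hdist _ (hmemI t ht)
    rw [habs_tz t ht] at hd
    have h1' : ‖deriv h ((t:ℂ)*z)‖ * r ≤ (1 - t*r) ^ (-c2 : ℝ) * r :=
      mul_le_mul_of_nonneg_right hd hr0.le
    calc ‖ζ‖ * (t*r)^n * ‖deriv h ((t:ℂ)*z)‖ * r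
        = ‖ζ‖ * (t*r)^n * (‖deriv h ((t:ℂ)*z)‖ * r) := by ring
      _ ≤ ‖ζ‖ * (t*r)^n * ((1 - t*r) ^ (-c2 : ℝ) * r) := by
          exact mul_le_mul_of_nonneg_left h1'
            (mul_nonneg (norm_nonneg _) (pow_nonneg (mul_nonneg ht.1 hr0.le) n))
  have hnormh : ‖h z‖ ≤ ∫ t in (0:ℝ)..1, B1 t := by
    rw [hHz]
    calc ‖∫ t in (0:ℝ)..1, deriv h ((t:ℂ)*z) * z‖
        ≤ ∫ t in (0:ℝ)..1, ‖deriv h ((t:ℂ)*z) * z‖ :=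
          intervalIntegral.norm_integral_le_integral_norm zero_le_one
      _ ≤ ∫ t in (0:ℝ)..1, B1 t := by
          apply intervalIntegral.integral_mono_on zero_le_one ?_ hB1int hbound1
          exact hIh.norm
  have hnormg : ‖g z‖ ≤ ∫ t in (0:ℝ)..1, B2 t := by
    rw [hGz]
    calc ‖∫ t in (0:ℝ)..1, deriv g ((t:ℂ)*z) * z‖
        ≤ ∫ t in (0:ℝ)..1, ‖deriv g ((t:ℂ)*z) * z‖ :=
          intervalIntegral.norm_integral_le_integral_norm zero_le_one
      _ ≤ ∫ t in (0:ℝ)..1, B2 t := by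
          apply intervalIntegral.integral_mono_on zero_le_one ?_ hB2int hbound2
          exact hIg.norm
  -- substitution
  set φ : ℝ → ℝ := fun ρ => (1 + ‖ζ‖ * ρ^n) * (1 - ρ) ^ (-c2 : ℝ) with hφdef
  have hsub : (∫ t in (0:ℝ)..1, B1 t) + (∫ t in (0:ℝ)..1, B2 t) = ∫ ρ in (0:ℝ)..r, φ ρ := by
    rw [← intervalIntegral.integral_add hB1int hB2int]
    have heq : ∀ t, B1 t + B2 t = φ (t * r) * r := by
      intro t
      rw [hB1def, hB2def, hφdef]
      ring
    rw [intervalIntegral.integral_congr (fun t _ => heq t)]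
    rw [intervalIntegral.integral_mul_const]
    rw [mul_comm]
    have := intervalIntegral.smul_integral_comp_mul_right φ r (a := 0) (b := 1)
    simpa [smul_eq_mul] using this
  have hfinal : (∫ ρ in (0:ℝ)..r, φ ρ) =
      ∫ ρ in (0:ℝ)..r, (1 + ‖ζ‖ * ρ ^ n) / (1 - ρ) ^ (2 * (1 - α)) := by
    apply intervalIntegral.integral_congr
    intro ρ hρ
    rw [uIcc_of_le hr0.le] at hρ
    have hρ1 : (0:ℝ) < 1 - ρ := by
      have := hρ.2
      linarith [hr1]
    show (1 + ‖ζ‖ * ρ ^ n) * (1 - ρ) ^ (-(2*(1-α)) : ℝ)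
      = (1 + ‖ζ‖ * ρ ^ n) / (1 - ρ) ^ (2 * (1 - α))
    rw [Real.rpow_neg hρ1.le, div_eq_mul_inv]
  calc ‖h z + starRingEnd ℂ (g z)‖
      ≤ ‖h z‖ + ‖starRingEnd ℂ (g z)‖ := norm_add_le _ _
    _ = ‖h z‖ + ‖g z‖ := by rw [Complex.norm_conj]
    _ ≤ (∫ t in (0:ℝ)..1, B1 t) + (∫ t in (0:ℝ)..1, B2 t) := add_le_add hnormh hnormg
    _ = ∫ ρ in (0:ℝ)..r, φ ρ := hsub
    _ = _ := hfinal
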